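/- Let r > 0, let a : [0,∞) → ℝ^n be measurable with ∫₀^∞ e^{−rt}|a_t|² dt < ∞, and define x_t = ∫₀ᵗ a_s ds. Then ∫₀^∞ e^{−rt}|x_t|² dt ≤ (4/r²)·∫₀^∞ e^{−rt}|a_t|² dt. -/

import Mathlib

open MeasureTheory intervalIntegral

open Set Real
open scoped ENNReal

section aux

variable {n : ℕ}


-- integrability of the weighted square on Ioc 0 t
lemma int2 (r : ℝ) (hr : 0 < r) (a : ℝ → EuclideanSpace ℝ (Fin n))
    (hmeas : Measurable a)
    (ha : Integrable (fun t => Real.exp (-r * t) * ‖a t‖ ^ 2)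
      (volume.restrict (Set.Ioi (0:ℝ)))) (t : ℝ) :
    IntegrableOn (fun s => Real.exp (-(r/2) * s) * ‖a s‖ ^ 2) (Set.Ioc 0 t) volume := by
  have hg : IntegrableOn (fun s => Real.exp ((r/2) * t) * (Real.exp (-r * s) * ‖a s‖ ^ 2))
      (Set.Ioc 0 t) volume :=
    ((MeasureTheory.IntegrableOn.mono_set ha Set.Ioc_subset_Ioi_self).const_mul _)
  refine Integrable.mono' hg ?_ ?_
  · exact (((Real.measurable_exp.comp (measurable_const.mul measurable_id))).mul
      ((hmeas.norm).pow_const 2)).aestronglyMeasurable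
  · refine ae_restrict_of_forall_mem measurableSet_Ioc fun s hs => ?_
    have h1 : Real.exp (-(r/2) * s) * ‖a s‖ ^ 2
        = Real.exp ((r/2) * s) * (Real.exp (-r * s) * ‖a s‖ ^ 2) := by
      rw [← mul_assoc, ← Real.exp_add]; ring_nf
    rw [Real.norm_of_nonneg (by positivity), h1]
    have h2 : Real.exp ((r/2) * s) ≤ Real.exp ((r/2) * t) :=
      Real.exp_le_exp.2 (by nlinarith [hs.2, hr])
    exact mul_le_mul_of_nonneg_right h2 (by positivity)

-- Step A pointwise bound lemma
lemma step_A (r : ℝ) (hr : 0 < r) (a : ℝ → EuclideanSpace ℝ (Fin n))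
    (hmeas : Measurable a)
    (haloc : ∀ t : ℝ, IntegrableOn a (Set.Ioc 0 t) volume)
    (ha : Integrable (fun t => Real.exp (-r * t) * ‖a t‖ ^ 2)
      (volume.restrict (Set.Ioi (0:ℝ))))
    {t : ℝ} (ht : 0 < t) :
    Real.exp (-r * t) * ‖∫ s in (0:ℝ)..t, a s‖ ^ 2 ≤
      2 / r * Real.exp (-(r/2) * t) *
        ∫ s in Set.Ioc (0:ℝ) t, Real.exp (-(r/2) * s) * ‖a s‖ ^ 2 := by
  set g := fun s => ‖a s‖ with hgdef
  set E := ∫ s in Set.Ioc (0:ℝ) t, Real.exp ((r/2) * s) with hE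
  set G := ∫ s in Set.Ioc (0:ℝ) t, Real.exp (-(r/2) * s) * ‖a s‖ ^ 2 with hG
  have hGnn : 0 ≤ G := by
    apply MeasureTheory.integral_nonneg
    intro s; positivity
  have hEnn : 0 ≤ E := by
    apply MeasureTheory.integral_nonneg
    intro s; positivity
  -- Cauchy-Schwarz
  have hconj : (2:ℝ).HolderConjugate 2 := ⟨by norm_num, by norm_num, by norm_num⟩
  have hcont4 : Continuous fun s : ℝ => Real.exp ((r/4) * s) := by continuity
  have hfM : MemLp (fun s => Real.exp ((r/4) * s)) (ENNReal.ofReal 2)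
      (volume.restrict (Set.Ioc (0:ℝ) t)) := by
    rw [show ENNReal.ofReal (2:ℝ) = 2 by simp [ENNReal.ofReal_ofNat]]
    rw [memLp_two_iff_integrable_sq hcont4.aestronglyMeasurable]
    have h0 : IntegrableOn (fun s => Real.exp ((r/2) * s)) (Set.Ioc (0:ℝ) t) volume :=
      (by continuity : Continuous fun s : ℝ => Real.exp ((r/2) * s)).integrableOn_Ioc
    apply h0.congr
    refine Filter.Eventually.of_forall fun s => ?_
    simp only [pow_two, ← Real.exp_add]
    ring_nf
  have hhM : MemLp (fun s => Real.exp (-(r/4) * s) * ‖a s‖) (ENNReal.ofReal 2)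
      (volume.restrict (Set.Ioc (0:ℝ) t)) := by
    rw [show ENNReal.ofReal (2:ℝ) = 2 by simp [ENNReal.ofReal_ofNat]]
    rw [memLp_two_iff_integrable_sq
      ((by fun_prop : Measurable fun s => Real.exp (-(r/4) * s) * ‖a s‖).aestronglyMeasurable)]
    apply (int2 r hr a hmeas ha t).congr
    refine Filter.Eventually.of_forall fun s => ?_
    simp only [mul_pow, pow_two (Real.exp _), ← Real.exp_add]
    ring_nf
  have hCS : (∫ s in Set.Ioc (0:ℝ) t, ‖a s‖) ≤ E ^ ((1:ℝ)/2) * G ^ ((1:ℝ)/2) := by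
    have key := MeasureTheory.integral_mul_le_Lp_mul_Lq_of_nonneg hconj
      (Filter.Eventually.of_forall fun s => (Real.exp_pos _).le)
      (Filter.Eventually.of_forall fun s => by positivity) hfM hhM
    have h1 : ∀ s : ℝ, Real.exp ((r/4) * s) * (Real.exp (-(r/4) * s) * ‖a s‖) = ‖a s‖ := by
      intro s
      rw [← mul_assoc, ← Real.exp_add]
      ring_nf
      rw [Real.exp_zero, one_mul]
    have h2 : ∀ s : ℝ, Real.exp ((r/4) * s) ^ (2:ℝ) = Real.exp ((r/2) * s) := by
      intro s
      rw [show (2:ℝ) = ((2:ℕ):ℝ) by norm_num, Real.rpow_natCast, pow_two, ← Real.exp_add]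
      ring_nf
    have h3 : ∀ s : ℝ, (Real.exp (-(r/4) * s) * ‖a s‖) ^ (2:ℝ)
        = Real.exp (-(r/2) * s) * ‖a s‖ ^ 2 := by
      intro s
      rw [show (2:ℝ) = ((2:ℕ):ℝ) by norm_num, Real.rpow_natCast, mul_pow,
        pow_two (Real.exp _), ← Real.exp_add]
      ring_nf
    simp only [h1, h2, h3] at key
    exact key
  -- bound E
  have hEle : E ≤ 2 / r * Real.exp ((r/2) * t) := by
    have hderiv : ∀ s ∈ Set.uIcc (0:ℝ) t, HasDerivAt (fun u => 2 / r * Real.exp ((r/2) * u))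
        (Real.exp ((r/2) * s)) s := by
      intro s _
      have h : HasDerivAt (fun u => 2 / r * Real.exp ((r/2) * u))
          (2 / r * (Real.exp (r / 2 * s) * (r / 2 * 1))) s :=
        (((hasDerivAt_id s).const_mul (r/2)).exp).const_mul (2/r)
      convert h using 1
      field_simp
    have hint : IntervalIntegrable (fun s => Real.exp ((r/2) * s)) volume 0 t :=
      ((by continuity : Continuous fun s : ℝ => Real.exp ((r/2) * s))).intervalIntegrable 0 t
    have hFTC := intervalIntegral.integral_eq_sub_of_hasDerivAt hderiv hint
    have hEeq : E = ∫ s in (0:ℝ)..t, Real.exp ((r/2) * s) :=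
      (intervalIntegral.integral_of_le ht.le).symm
    rw [hEeq, hFTC]
    have : 0 < 2 / r := by positivity
    simp only [mul_zero, Real.exp_zero, mul_one]
    nlinarith [this]
  -- combine
  have hxle : ‖∫ s in (0:ℝ)..t, a s‖ ≤ ∫ s in Set.Ioc (0:ℝ) t, ‖a s‖ := by
    rw [← intervalIntegral.integral_of_le ht.le]
    exact intervalIntegral.norm_integral_le_integral_norm ht.le
  have hnn : 0 ≤ ∫ s in Set.Ioc (0:ℝ) t, ‖a s‖ :=
    MeasureTheory.integral_nonneg fun s => norm_nonneg _
  have hsq : ‖∫ s in (0:ℝ)..t, a s‖ ^ 2 ≤ E * G := by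
    have h4 : (E ^ ((1:ℝ)/2) * G ^ ((1:ℝ)/2)) ^ 2 = E * G := by
      rw [mul_pow, ← Real.rpow_natCast (E ^ ((1:ℝ)/2)) 2, ← Real.rpow_natCast (G ^ ((1:ℝ)/2)) 2,
        ← Real.rpow_mul hEnn, ← Real.rpow_mul hGnn]
      norm_num
    calc ‖∫ s in (0:ℝ)..t, a s‖ ^ 2 ≤ (∫ s in Set.Ioc (0:ℝ) t, ‖a s‖) ^ 2 := by
          apply pow_le_pow_left₀ (norm_nonneg _) hxle
      _ ≤ (E ^ ((1:ℝ)/2) * G ^ ((1:ℝ)/2)) ^ 2 := pow_le_pow_left₀ hnn hCS 2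
      _ = E * G := h4
  have hEG : E * G ≤ 2 / r * Real.exp ((r/2) * t) * G :=
    mul_le_mul_of_nonneg_right hEle hGnn
  calc Real.exp (-r * t) * ‖∫ s in (0:ℝ)..t, a s‖ ^ 2
      ≤ Real.exp (-r * t) * (2 / r * Real.exp ((r/2) * t) * G) :=
        mul_le_mul_of_nonneg_left (hsq.trans hEG) (Real.exp_pos _).le
    _ = 2 / r * Real.exp (-(r/2) * t) * G := by
        rw [show Real.exp (-r*t) * (2/r * Real.exp ((r/2)*t) * G)
          = 2/r * (Real.exp (-r*t) * Real.exp ((r/2)*t)) * G by ring, ← Real.exp_add]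
        ring_nf


end aux

/-- Discounted energy estimate: for `x_t = ∫₀ᵗ a_s ds`,
`∫₀^∞ e^{−rt}|x_t|² dt ≤ (4/r²) ∫₀^∞ e^{−rt}|a_t|² dt`. -/
theorem stmt_6 {n : ℕ} (r : ℝ) (hr : 0 < r) (a : ℝ → EuclideanSpace ℝ (Fin n))
    (hmeas : Measurable a)
    (haloc : ∀ t : ℝ, IntegrableOn a (Set.Ioc 0 t) volume)
    (ha : Integrable (fun t => Real.exp (-r * t) * ‖a t‖ ^ 2)
      (volume.restrict (Set.Ioi (0:ℝ))))
    (x : ℝ → EuclideanSpace ℝ (Fin n))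
    (hx : ∀ t, x t = ∫ s in (0:ℝ)..t, a s) :
    (∫ t in Set.Ioi (0:ℝ), Real.exp (-r * t) * ‖x t‖ ^ 2) ≤
      4 / r ^ 2 * ∫ t in Set.Ioi (0:ℝ), Real.exp (-r * t) * ‖a t‖ ^ 2 := by
  -- notation
  set φ : ℝ → ℝ≥0∞ := fun s => ENNReal.ofReal (Real.exp (-(r/2) * s) * ‖a s‖ ^ 2) with hφ
  set ψ : ℝ → ℝ≥0∞ := fun t => ENNReal.ofReal (Real.exp (-(r/2) * t)) with hψ
  have hφmeas : Measurable φ := by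
    apply Measurable.ennreal_ofReal
    exact ((Real.measurable_exp.comp (measurable_const.mul measurable_id))).mul
      ((hmeas.norm).pow_const 2)
  have hψmeas : Measurable ψ := by
    apply Measurable.ennreal_ofReal
    exact Real.measurable_exp.comp (measurable_const.mul measurable_id)
  set R : ℝ≥0∞ := ∫⁻ s in Set.Ioi (0:ℝ), ENNReal.ofReal (Real.exp (-r * s) * ‖a s‖ ^ 2) with hR
  have hA_nonneg : (0:ℝ → ℝ) ≤ᵐ[volume.restrict (Set.Ioi (0:ℝ))]
      fun s => Real.exp (-r * s) * ‖a s‖ ^ 2 := by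
    filter_upwards with s
    positivity
  have hRA : ENNReal.ofReal (∫ s in Set.Ioi (0:ℝ), Real.exp (-r * s) * ‖a s‖ ^ 2) = R :=
    MeasureTheory.ofReal_integral_eq_lintegral_ofReal ha hA_nonneg
  have hRfin : R ≠ ⊤ := by rw [← hRA]; exact ENNReal.ofReal_ne_top
  -- continuity/measurability of x on Ici 0
  have hxcont : ContinuousOn x (Set.Ici (0:ℝ)) := by
    intro t ht
    have h1 : ContinuousOn (fun u => ∫ s in Set.Ioc (0:ℝ) u, a s) (Set.Icc (0:ℝ) (t+1)) := by
      apply intervalIntegral.continuousOn_primitive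
      have : IntegrableOn a (Set.Ioc (0:ℝ) (t+1)) volume := haloc (t+1)
      exact this.congr_set_ae (MeasureTheory.Ioc_ae_eq_Icc).symm
    have h2 : ContinuousOn x (Set.Icc (0:ℝ) (t+1)) := by
      apply h1.congr
      intro u hu
      rw [hx u, intervalIntegral.integral_of_le hu.1]
    have h3 : ContinuousWithinAt x (Set.Icc (0:ℝ) (t+1)) t :=
      h2.continuousWithinAt ⟨ht, by linarith [ht.out]⟩
    refine h3.mono_of_mem_nhdsWithin ?_
    have : Set.Icc (0:ℝ) (t+1) = Set.Ici (0:ℝ) ∩ Set.Iic (t+1) := (Set.Ici_inter_Iic).symm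
    rw [this]
    exact Filter.inter_mem self_mem_nhdsWithin
      (mem_nhdsWithin_of_mem_nhds (Iic_mem_nhds (by linarith)))
  have hxmeas : AEStronglyMeasurable (fun t => Real.exp (-r * t) * ‖x t‖ ^ 2)
      (volume.restrict (Set.Ioi (0:ℝ))) := by
    have : AEStronglyMeasurable x (volume.restrict (Set.Ici (0:ℝ))) :=
      hxcont.aestronglyMeasurable measurableSet_Ici
    have hx' : AEStronglyMeasurable x (volume.restrict (Set.Ioi (0:ℝ))) :=
      this.mono_measure (Measure.restrict_mono Set.Ioi_subset_Ici_self le_rfl)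
    exact (Real.continuous_exp.comp (continuous_const.mul continuous_id)).aestronglyMeasurable.mul
      ((hx'.norm.pow 2))
  -- express LHS via lintegral
  set L : ℝ≥0∞ := ∫⁻ t in Set.Ioi (0:ℝ), ENNReal.ofReal (Real.exp (-r * t) * ‖x t‖ ^ 2) with hL
  have hLHS : (∫ t in Set.Ioi (0:ℝ), Real.exp (-r * t) * ‖x t‖ ^ 2) = L.toReal := by
    rw [MeasureTheory.integral_eq_lintegral_of_nonneg_ae ?_ hxmeas]
    filter_upwards with t
    positivity
  -- key inequality: L ≤ ofReal (4 / r^2) * R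
  have hGl : ∀ t : ℝ, 0 < t → ENNReal.ofReal
      (∫ s in Set.Ioc (0:ℝ) t, Real.exp (-(r/2) * s) * ‖a s‖ ^ 2)
      = ∫⁻ s in Set.Ioc (0:ℝ) t, φ s := by
    intro t _
    exact MeasureTheory.ofReal_integral_eq_lintegral_ofReal
      ((int2 r hr a hmeas ha t))
      (Filter.Eventually.of_forall fun s => by positivity)
  have hbound : ∀ t ∈ Set.Ioi (0:ℝ), ENNReal.ofReal (Real.exp (-r * t) * ‖x t‖ ^ 2) ≤
      ENNReal.ofReal (2 / r) * (ψ t * ∫⁻ s in Set.Ioc (0:ℝ) t, φ s) := by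
    intro t ht
    have hA := step_A r hr a hmeas haloc ha ht
    rw [hx t]  -- ?
    calc ENNReal.ofReal (Real.exp (-r * t) * ‖∫ s in (0:ℝ)..t, a s‖ ^ 2)
        ≤ ENNReal.ofReal (2 / r * Real.exp (-(r/2) * t) *
            ∫ s in Set.Ioc (0:ℝ) t, Real.exp (-(r/2) * s) * ‖a s‖ ^ 2) :=
          ENNReal.ofReal_le_ofReal hA
      _ = ENNReal.ofReal (2 / r) * (ψ t * ∫⁻ s in Set.Ioc (0:ℝ) t, φ s) := by
          rw [← hGl t ht, mul_assoc,
            ENNReal.ofReal_mul (by positivity), ENNReal.ofReal_mul (Real.exp_nonneg _)]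
  -- Tonelli / swap
  set K : ℝ × ℝ → ℝ≥0∞ :=
    fun p => Set.indicator {q : ℝ × ℝ | q.2 ≤ q.1} (fun q => ψ q.1 * φ q.2) p with hK
  have hKmeas : Measurable K :=
    ((hψmeas.comp measurable_fst).mul (hφmeas.comp measurable_snd)).indicator
      (measurableSet_le measurable_snd measurable_fst)
  have hinner_t : ∀ t ∈ Set.Ioi (0:ℝ),
      (∫⁻ s in Set.Ioi (0:ℝ), K (t, s)) = ψ t * ∫⁻ s in Set.Ioc (0:ℝ) t, φ s := by
    intro t _
    have h1 : ∀ s : ℝ, K (t, s) = Set.indicator (Set.Iic t) (fun s => ψ t * φ s) s := by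
      intro s
      simp only [hK]
      by_cases hst : s ≤ t
      · rw [Set.indicator_of_mem (show (t, s) ∈ {q : ℝ × ℝ | q.2 ≤ q.1} from hst),
          Set.indicator_of_mem (show s ∈ Set.Iic t from hst)]
      · rw [Set.indicator_of_notMem (show (t, s) ∉ {q : ℝ × ℝ | q.2 ≤ q.1} from hst),
          Set.indicator_of_notMem (show s ∉ Set.Iic t from hst)]
    simp only [h1]
    rw [lintegral_indicator measurableSet_Iic, Measure.restrict_restrict measurableSet_Iic,
      show Set.Iic t ∩ Set.Ioi (0:ℝ) = Set.Ioc (0:ℝ) t by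
        rw [Set.inter_comm]; exact Set.Ioi_inter_Iic]
    exact lintegral_const_mul' _ _ ENNReal.ofReal_ne_top
  have hinner_s : ∀ s ∈ Set.Ioi (0:ℝ),
      (∫⁻ t in Set.Ioi (0:ℝ), K (t, s)) = φ s * ∫⁻ t in Set.Ici s, ψ t := by
    intro s hs
    have h1 : ∀ t : ℝ, K (t, s) = Set.indicator (Set.Ici s) (fun t => ψ t * φ s) t := by
      intro t
      simp only [hK]
      by_cases hst : s ≤ t
      · rw [Set.indicator_of_mem (show (t, s) ∈ {q : ℝ × ℝ | q.2 ≤ q.1} from hst),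
          Set.indicator_of_mem (show t ∈ Set.Ici s from hst)]
      · rw [Set.indicator_of_notMem (show (t, s) ∉ {q : ℝ × ℝ | q.2 ≤ q.1} from hst),
          Set.indicator_of_notMem (show t ∉ Set.Ici s from hst)]
    simp only [h1]
    rw [lintegral_indicator measurableSet_Ici, Measure.restrict_restrict measurableSet_Ici,
      show Set.Ici s ∩ Set.Ioi (0:ℝ) = Set.Ici s by
        apply Set.inter_eq_self_of_subset_left
        exact fun u hu => Set.mem_Ioi.2 (lt_of_lt_of_le (Set.mem_Ioi.1 hs) hu)]
    rw [lintegral_mul_const' _ _ ENNReal.ofReal_ne_top, mul_comm]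
  -- the exponential integral
  have hJ : ∀ s : ℝ, (∫⁻ t in Set.Ici s, ψ t)
      = ENNReal.ofReal (2 / r * Real.exp (-(r/2) * s)) := by
    intro s
    rw [← MeasureTheory.Measure.restrict_congr_set MeasureTheory.Ioi_ae_eq_Ici]
    rw [← MeasureTheory.ofReal_integral_eq_lintegral_ofReal
      (exp_neg_integrableOn_Ioi s (by positivity : (0:ℝ) < r/2))
      (Filter.Eventually.of_forall fun u => (Real.exp_pos _).le)]
    congr 1
    have h2 : (∫ u in Set.Ioi s, Real.exp (-(r/2) * u))
        = ∫ u in Set.Ioi s, (fun v => Real.exp (-v)) (r/2 * u) := by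
      congr 1 with u
      ring_nf
    rw [h2, MeasureTheory.integral_comp_mul_left_Ioi (fun v => Real.exp (-v)) s
      (by positivity : (0:ℝ) < r/2), integral_exp_neg_Ioi, smul_eq_mul]
    rw [show -(r/2 * s) = -(r/2) * s by ring]
    rw [show ((r:ℝ)/2)⁻¹ = 2 / r by field_simp]
  -- chain everything
  have hchain : L ≤ ENNReal.ofReal (4 / r ^ 2) * R := by
    calc L ≤ ∫⁻ t in Set.Ioi (0:ℝ),
          ENNReal.ofReal (2 / r) * (ψ t * ∫⁻ s in Set.Ioc (0:ℝ) t, φ s) :=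
        lintegral_mono_ae (ae_restrict_of_forall_mem measurableSet_Ioi hbound)
      _ = ENNReal.ofReal (2 / r) *
          ∫⁻ t in Set.Ioi (0:ℝ), ψ t * ∫⁻ s in Set.Ioc (0:ℝ) t, φ s :=
        lintegral_const_mul' _ _ ENNReal.ofReal_ne_top
      _ = ENNReal.ofReal (2 / r) * ∫⁻ t in Set.Ioi (0:ℝ), ∫⁻ s in Set.Ioi (0:ℝ), K (t, s) := by
        congr 1
        refine (setLIntegral_congr_fun measurableSet_Ioi (fun t ht => ?_)).symm
        exact hinner_t t ht
      _ = ENNReal.ofReal (2 / r) * ∫⁻ s in Set.Ioi (0:ℝ), ∫⁻ t in Set.Ioi (0:ℝ), K (t, s) := by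
        congr 1
        exact MeasureTheory.lintegral_lintegral_swap hKmeas.aemeasurable
      _ = ENNReal.ofReal (2 / r) * ∫⁻ s in Set.Ioi (0:ℝ),
          φ s * ENNReal.ofReal (2 / r * Real.exp (-(r/2) * s)) := by
        congr 1
        refine setLIntegral_congr_fun measurableSet_Ioi (fun s hs => ?_)
        rw [hinner_s s hs, hJ s]
      _ = ENNReal.ofReal (2 / r) * (ENNReal.ofReal (2 / r) * R) := by
        congr 1
        rw [← lintegral_const_mul' (ENNReal.ofReal (2 / r)) _ ENNReal.ofReal_ne_top]
        refine setLIntegral_congr_fun measurableSet_Ioi (fun s _ => ?_)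
        have h1 : Real.exp (-(r/2) * s) * ‖a s‖ ^ 2 * (Real.exp (-(r/2) * s))
            = Real.exp (-r * s) * ‖a s‖ ^ 2 := by
          rw [show Real.exp (-(r/2)*s) * ‖a s‖^2 * Real.exp (-(r/2)*s)
            = Real.exp (-(r/2)*s) * Real.exp (-(r/2)*s) * ‖a s‖^2 by ring, ← Real.exp_add]
          ring_nf
        simp only [hφ]
        rw [ENNReal.ofReal_mul (by positivity : (0:ℝ) ≤ 2 / r)]
        rw [show (ENNReal.ofReal (Real.exp (-(r/2) * s) * ‖a s‖ ^ 2)) *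
            (ENNReal.ofReal (2 / r) * ENNReal.ofReal (Real.exp (-(r/2) * s)))
          = ENNReal.ofReal (2 / r) * (ENNReal.ofReal (Real.exp (-(r/2) * s) * ‖a s‖ ^ 2) *
            ENNReal.ofReal (Real.exp (-(r/2) * s))) by ring]
        rw [← ENNReal.ofReal_mul (by positivity), h1]
      _ = ENNReal.ofReal (4 / r ^ 2) * R := by
        rw [← mul_assoc, ← ENNReal.ofReal_mul (by positivity : (0:ℝ) ≤ 2 / r)]
        congr 2
        field_simp
        ring
  -- conclude
  rw [hLHS]
  have hAnn : 0 ≤ ∫ s in Set.Ioi (0:ℝ), Real.exp (-r * s) * ‖a s‖ ^ 2 :=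
    MeasureTheory.integral_nonneg fun s => by positivity
  have hfin : ENNReal.ofReal (4 / r ^ 2) * R ≠ ⊤ :=
    ENNReal.mul_ne_top ENNReal.ofReal_ne_top hRfin
  have hmono := ENNReal.toReal_mono hfin hchain
  refine hmono.trans_eq ?_
  rw [ENNReal.toReal_mul, ENNReal.toReal_ofReal (by positivity : (0:ℝ) ≤ 4 / r ^ 2),
    ← hRA, ENNReal.toReal_ofReal hAnn]
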